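/- For the first-order ODE y' = f(x,y) with f continuous, the set of values y(x₁) attained at a fixed x₁ by solutions of the initial value problem y(x₀) = y₀ defined on [x₀, x₁] is a compact interval (the Kneser theorem on the funnel section). -/

import Mathlib

open Set Filter Topology BoundedContinuousFunction

namespace KneserAux



/-- Solutions are `M`-Lipschitz on the interval and stay in the tube. -/
theorem sol_dist_le {g : ℝ → ℝ → ℝ} {M x₀ x₁ : ℝ} (hM : ∀ x y, |g x y| ≤ M)
    {y : ℝ → ℝ} (hy : ∀ x ∈ Icc x₀ x₁, HasDerivWithinAt y (g x (y x)) (Icc x₀ x₁) x)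
    {s t : ℝ} (hs : s ∈ Icc x₀ x₁) (ht : t ∈ Icc x₀ x₁) :
    |y t - y s| ≤ M * |t - s| := by
  have := (convex_Icc x₀ x₁).norm_image_sub_le_of_norm_hasDerivWithin_le
    (f := y) (f' := fun x => g x (y x)) (C := M) hy
    (fun x hx => by simpa [Real.norm_eq_abs] using hM x (y x)) hs ht
  simpa [Real.norm_eq_abs] using this

theorem sol_mem_tube {g : ℝ → ℝ → ℝ} {M x₀ x₁ y₀ : ℝ} (hM : ∀ x y, |g x y| ≤ M)
    {y : ℝ → ℝ} (hy : ∀ x ∈ Icc x₀ x₁, HasDerivWithinAt y (g x (y x)) (Icc x₀ x₁) x)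
    (hy0 : y x₀ = y₀) (hx : x₀ ≤ x₁) {t : ℝ} (ht : t ∈ Icc x₀ x₁) :
    y t ∈ Icc (y₀ - M * (x₁ - x₀)) (y₀ + M * (x₁ - x₀)) := by
  have h0 : (x₀ : ℝ) ∈ Icc x₀ x₁ := ⟨le_rfl, hx⟩
  have h := sol_dist_le hM hy h0 ht
  have habs : |t - x₀| ≤ x₁ - x₀ := by
    rw [abs_of_nonneg (by linarith [ht.1])]; linarith [ht.2]
  have hM0 : 0 ≤ M := (abs_nonneg _).trans (hM x₀ (y x₀))
  have : |y t - y₀| ≤ M * (x₁ - x₀) := by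
    calc |y t - y₀| = |y t - y x₀| := by rw [hy0]
    _ ≤ M * |t - x₀| := h
    _ ≤ M * (x₁ - x₀) := by nlinarith
  constructor <;> [linarith [abs_le.1 this |>.1]; linarith [abs_le.1 this |>.2]]

/-- A solution satisfies the integral equation. -/
theorem sol_integral {g : ℝ → ℝ → ℝ} (hg : Continuous fun p : ℝ × ℝ => g p.1 p.2)
    {x₀ x₁ : ℝ} {y : ℝ → ℝ}
    (hy : ∀ x ∈ Icc x₀ x₁, HasDerivWithinAt y (g x (y x)) (Icc x₀ x₁) x)
    {x : ℝ} (hx : x ∈ Icc x₀ x₁) :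
    y x = y x₀ + ∫ t in x₀..x, g t (y t) := by
  have hycont : ContinuousOn y (Icc x₀ x₁) := fun t ht => (hy t ht).continuousWithinAt
  have hsub : Icc x₀ x ⊆ Icc x₀ x₁ := Icc_subset_Icc le_rfl hx.2
  have hintc : ContinuousOn (fun t => g t (y t)) (Icc x₀ x) :=
    hg.comp_continuousOn ((continuousOn_id.prodMk (hycont.mono hsub)))
  have key : ∫ t in x₀..x, g t (y t) = y x - y x₀ := by
    apply intervalIntegral.integral_eq_sub_of_hasDeriv_right_of_le hx.1
      (hycont.mono hsub)
    · intro t ht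
      have htI : t ∈ Icc x₀ x₁ := ⟨ht.1.le, ht.2.le.trans hx.2⟩
      have hnhds : Icc x₀ x₁ ∈ 𝓝 t := Icc_mem_nhds ht.1 (lt_of_lt_of_le ht.2 hx.2)
      exact ((hy t htI).hasDerivAt hnhds).hasDerivWithinAt
    · exact hintc.intervalIntegrable_of_Icc hx.1
  rw [key]; ring




/-- A continuous function satisfying the integral equation is a solution. -/
theorem integral_sol {f : ℝ → ℝ → ℝ} (hf : Continuous fun p : ℝ × ℝ => f p.1 p.2)
    {x₀ x₁ y₀ : ℝ} {Y : ℝ → ℝ} (hY : Continuous Y)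
    (heq : ∀ x ∈ Icc x₀ x₁, Y x = y₀ + ∫ t in x₀..x, f t (Y t)) :
    ∀ x ∈ Icc x₀ x₁, HasDerivWithinAt Y (f x (Y x)) (Icc x₀ x₁) x := by
  intro x hx
  set h : ℝ → ℝ := fun t => f t (Y t) with hh
  have hhc : Continuous h := hf.comp (continuous_id.prodMk hY)
  have hG : HasDerivAt (fun u => y₀ + ∫ t in x₀..u, h t) (h x) x := by
    have := intervalIntegral.integral_hasDerivAt_right
      (hhc.intervalIntegrable x₀ x) (hhc.stronglyMeasurableAtFilter _ _) hhc.continuousAt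
    simpa using this.const_add y₀
  exact hG.hasDerivWithinAt.congr (fun t ht => heq t ht) (heq x hx)




noncomputable def infConv (F : ℝ × ℝ → ℝ) (c : ℝ) (p : ℝ × ℝ) : ℝ :=
  ⨅ q : ℝ × ℝ, (F q + c * dist p q)

variable {F : ℝ × ℝ → ℝ} {M c : ℝ}

theorem infConv_bddBelow (hM : ∀ p, |F p| ≤ M) (hc : 0 < c) (p : ℝ × ℝ) :
    BddBelow (range fun q => F q + c * dist p q) := by
  refine ⟨-M, ?_⟩
  rintro x ⟨q, rfl⟩
  have h1 := (abs_le.1 (hM q)).1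
  have h2 : 0 ≤ c * dist p q := mul_nonneg hc.le dist_nonneg
  simp only; linarith

theorem infConv_le_apply (hM : ∀ p, |F p| ≤ M) (hc : 0 < c) (p q : ℝ × ℝ) :
    infConv F c p ≤ F q + c * dist p q := by
  unfold infConv
  exact ciInf_le (infConv_bddBelow hM hc p) q

theorem infConv_le (hM : ∀ p, |F p| ≤ M) (hc : 0 < c) (p : ℝ × ℝ) :
    infConv F c p ≤ F p := by
  have := infConv_le_apply hM hc p p
  simpa using this

theorem neg_le_infConv (hM : ∀ p, |F p| ≤ M) (hc : 0 < c) (p : ℝ × ℝ) :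
    -M ≤ infConv F c p := by
  unfold infConv
  refine le_ciInf fun q => ?_
  have h1 := (abs_le.1 (hM q)).1
  have h2 : 0 ≤ c * dist p q := mul_nonneg hc.le dist_nonneg
  linarith

theorem abs_infConv_le (hM : ∀ p, |F p| ≤ M) (hc : 0 < c) (p : ℝ × ℝ) :
    |infConv F c p| ≤ M :=
  abs_le.2 ⟨neg_le_infConv hM hc p,
    (infConv_le hM hc p).trans (abs_le.1 (hM p)).2⟩

theorem infConv_lipschitz (hM : ∀ p, |F p| ≤ M) (hc : 0 < c) :
    LipschitzWith c.toNNReal (infConv F c) := by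
  apply LipschitzWith.of_dist_le_mul
  intro p p'
  rw [Real.coe_toNNReal _ hc.le, Real.dist_eq, abs_sub_le_iff]
  have key : ∀ a b : ℝ × ℝ, infConv F c a - infConv F c b ≤ c * dist a b := by
    intro a b
    rw [sub_le_iff_le_add, ← sub_le_iff_le_add']
    have h1 : ∀ q, infConv F c a ≤ F q + c * dist a q := fun q => infConv_le_apply hM hc a q
    unfold infConv
    refine le_ciInf fun q => ?_
    have h2 : dist a q ≤ dist b q + dist a b := by
      have := dist_triangle a b q
      linarith [dist_comm a b ▸ this]
    have h3 := h1 q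
    unfold infConv at h3
    nlinarith
  exact ⟨key p p', by rw [dist_comm p p']; exact key p' p⟩

theorem infConv_approx (hFc : Continuous F) (hM : ∀ p, |F p| ≤ M)
    {T : Set (ℝ × ℝ)} (hT : IsCompact T) :
    ∀ ε > 0, ∃ c₀ : ℝ, ∀ c, c₀ ≤ c → 0 < c → ∀ p ∈ T, F p - ε ≤ infConv F c p := by
  intro ε hε
  have hM0 : 0 ≤ M := (abs_nonneg _).trans (hM (0, 0))
  have hT' : IsCompact (Metric.cthickening 1 T) := hT.cthickening
  have hUC : UniformContinuousOn F (Metric.cthickening 1 T) :=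
    hT'.uniformContinuousOn_of_continuous hFc.continuousOn
  obtain ⟨δ, hδ, hδ'⟩ := (Metric.uniformContinuousOn_iff_le.1 hUC) ε hε
  set δ' := min δ 1 with hδ'def
  have hδ'0 : 0 < δ' := lt_min hδ one_pos
  refine ⟨2 * M / δ', fun c hc hc0 p hp => ?_⟩
  unfold infConv
  refine le_ciInf fun q => ?_
  rcases le_or_gt (dist p q) δ' with hd | hd
  · have hpT' : p ∈ Metric.cthickening 1 T := Metric.self_subset_cthickening T hp
    have hqT' : q ∈ Metric.cthickening 1 T := by
      apply Metric.mem_cthickening_of_dist_le q p 1 T hp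
      calc dist q p = dist p q := dist_comm q p
      _ ≤ δ' := hd
      _ ≤ 1 := min_le_right _ _
    have := hδ' p hpT' q hqT' (hd.trans (min_le_left _ _))
    have h2 : |F p - F q| ≤ ε := by rwa [Real.dist_eq] at this
    have h3 : 0 ≤ c * dist p q := mul_nonneg hc0.le dist_nonneg
    linarith [(abs_le.1 h2).2]
  · have h1 : 2 * M ≤ c * dist p q := by
      have : 2 * M / δ' * δ' ≤ c * δ' := mul_le_mul_of_nonneg_right hc hδ'0.le
      rw [div_mul_cancel₀ _ hδ'0.ne'] at this
      nlinarith
    have h2 := (abs_le.1 (hM q)).1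
    have h3 := (abs_le.1 (hM p)).2
    linarith

/-- Peano existence theorem on a compact interval, for globally bounded continuous `f`. -/
theorem peano {f : ℝ → ℝ → ℝ} (hf : Continuous fun p : ℝ × ℝ => f p.1 p.2)
    {M : ℝ} (hM : ∀ x y, |f x y| ≤ M) (x₀ x₁ y₀ : ℝ) (hx : x₀ ≤ x₁)
    (limit_lemma : ∀ {g : ℕ → ℝ → ℝ → ℝ}, (∀ n, Continuous fun p : ℝ × ℝ => g n p.1 p.2) →
      (∀ n x y, |g n x y| ≤ M) →
      (∀ ε > 0, ∃ N, ∀ n ≥ N, ∀ s ∈ Icc x₀ x₁,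
        ∀ v ∈ Icc (y₀ - M * (x₁ - x₀)) (y₀ + M * (x₁ - x₀)), |g n s v - f s v| ≤ ε) →
      ∀ {y : ℕ → ℝ → ℝ}, (∀ n, y n x₀ = y₀) →
      (∀ n, ∀ x ∈ Icc x₀ x₁, HasDerivWithinAt (y n) (g n x (y n x)) (Icc x₀ x₁) x) →
      ∃ Y : ℝ → ℝ, Y x₀ = y₀ ∧
        (∀ x ∈ Icc x₀ x₁, HasDerivWithinAt Y (f x (Y x)) (Icc x₀ x₁) x) ∧
        ∃ φ : ℕ → ℕ, StrictMono φ ∧ Tendsto (fun k => y (φ k) x₁) atTop (𝓝 (Y x₁))) :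
    ∃ y : ℝ → ℝ, y x₀ = y₀ ∧
      ∀ x ∈ Icc x₀ x₁, HasDerivWithinAt y (f x (y x)) (Icc x₀ x₁) x := by
  set F : ℝ × ℝ → ℝ := fun p => f p.1 p.2 with hFdef
  have hMF : ∀ p, |F p| ≤ M := fun p => hM p.1 p.2
  have hM0 : 0 ≤ M := (abs_nonneg _).trans (hM x₀ y₀)
  have hcpos : ∀ n : ℕ, (0 : ℝ) < n + 1 := fun n => by positivity
  set g : ℕ → ℝ → ℝ → ℝ := fun n s v => infConv F ((n : ℝ) + 1) (s, v) with hgdef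
  -- each g n is Lipschitz, continuous, bounded
  have hglip : ∀ n : ℕ, LipschitzWith ((n : ℝ) + 1).toNNReal (infConv F ((n : ℝ) + 1)) :=
    fun n => infConv_lipschitz hMF (hcpos n)
  have hgc : ∀ n, Continuous fun p : ℝ × ℝ => g n p.1 p.2 := by
    intro n
    exact ((hglip n).continuous).comp (continuous_id)
  have hgM : ∀ n x y, |g n x y| ≤ M := fun n x y => abs_infConv_le hMF (hcpos n) (x, y)
  -- Picard–Lindelöf solutions for each n
  have hsol : ∀ n : ℕ, ∃ y : ℝ → ℝ, y x₀ = y₀ ∧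
      ∀ x ∈ Icc x₀ x₁, HasDerivWithinAt y (g n x (y x)) (Icc x₀ x₁) x := by
    intro n
    set L : NNReal := ((n : ℝ) + 1).toNNReal
    have hpl : IsPicardLindelof (fun s v => g n s v) (tmin := x₀) (tmax := x₁) ⟨x₀, le_rfl, hx⟩ y₀
        (M * (x₁ - x₀) + 1).toNNReal 0 M.toNNReal L := by
      constructor
      · intro t _
        apply LipschitzWith.lipschitzOnWith
        apply LipschitzWith.of_dist_le_mul
        intro v v'
        have h := (hglip n).dist_le_mul (t, v) (t, v')
        have hd : dist ((t, v) : ℝ × ℝ) (t, v') = dist v v' := by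
          rw [Prod.dist_eq]; simp [dist_nonneg]
        rw [hd] at h
        exact h
      · intro v _
        exact ((hglip n).continuous.comp (continuous_id.prodMk continuous_const)).continuousOn
      · intro t _ v _
        rw [Real.coe_toNNReal _ hM0]
        simpa [Real.norm_eq_abs] using hgM n t v
      · have : max (x₁ - x₀) (x₀ - x₀) = x₁ - x₀ := by
          rw [max_eq_left]; simp [sub_nonneg.2 hx]
        have hpos : 0 ≤ M * (x₁ - x₀) + 1 := by nlinarith
        simp only [Real.coe_toNNReal _ hM0, Real.coe_toNNReal _ hpos, NNReal.coe_zero, sub_zero]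
        rw [this]; linarith
    obtain ⟨y, hy0, hy⟩ := hpl.exists_eq_forall_mem_Icc_hasDerivWithinAt₀
    exact ⟨y, hy0, hy⟩
  choose y hy0 hy using hsol
  -- uniform approximation hypothesis
  have hgf : ∀ ε > 0, ∃ N, ∀ n ≥ N, ∀ s ∈ Icc x₀ x₁,
      ∀ v ∈ Icc (y₀ - M * (x₁ - x₀)) (y₀ + M * (x₁ - x₀)), |g n s v - f s v| ≤ ε := by
    intro ε hε
    have hTcomp : IsCompact ((Icc x₀ x₁) ×ˢ (Icc (y₀ - M * (x₁ - x₀)) (y₀ + M * (x₁ - x₀)))) :=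
      isCompact_Icc.prod isCompact_Icc
    obtain ⟨c₀, hc₀⟩ := infConv_approx hf hMF hTcomp ε hε
    refine ⟨⌈c₀⌉₊, fun n hn s hs v hv => ?_⟩
    have hc : c₀ ≤ (n : ℝ) + 1 := by
      calc c₀ ≤ ⌈c₀⌉₊ := Nat.le_ceil c₀
      _ ≤ (n : ℝ) := by exact_mod_cast hn
      _ ≤ (n : ℝ) + 1 := by linarith
    have happ := hc₀ _ hc (hcpos n) (s, v) (mk_mem_prod hs hv)
    have hle := infConv_le hMF (hcpos n) (s, v)
    rw [abs_sub_le_iff]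
    constructor
    · linarith
    · linarith
  obtain ⟨Y, hY0, hYsol, _⟩ := limit_lemma hgc hgM hgf hy0 hy
  exact ⟨Y, hY0, hYsol⟩




/-- Gluing two solutions that agree at a point. -/
theorem glue_sol {f : ℝ → ℝ → ℝ} {x₀ x₁ : ℝ} {u w : ℝ → ℝ} {xs : ℝ}
    (hxs : xs ∈ Icc x₀ x₁)
    (hu : ∀ x ∈ Icc x₀ x₁, HasDerivWithinAt u (f x (u x)) (Icc x₀ x₁) x)
    (hw : ∀ x ∈ Icc x₀ x₁, HasDerivWithinAt w (f x (w x)) (Icc x₀ x₁) x)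
    (hmatch : u xs = w xs) :
    ∀ x ∈ Icc x₀ x₁, HasDerivWithinAt (fun t => if t ≤ xs then u t else w t)
      (f x (if x ≤ xs then u x else w x)) (Icc x₀ x₁) x := by
  set y : ℝ → ℝ := fun t => if t ≤ xs then u t else w t with hydef
  intro x hx
  rcases lt_trichotomy x xs with hlt | heq | hgt
  · have hyx : y x = u x := if_pos hlt.le
    have hev : y =ᶠ[𝓝[Icc x₀ x₁] x] u := by
      filter_upwards [nhdsWithin_le_nhds (Iio_mem_nhds hlt)] with t ht
      exact if_pos (le_of_lt ht)
    have := (hu x hx).congr_of_eventuallyEq hev hyx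
    simpa [if_pos hlt.le] using this
  · subst heq
    have h1 : HasDerivWithinAt y (f x (u x)) (Icc x₀ x) x := by
      refine ((hu x hx).mono (Icc_subset_Icc le_rfl hx.2)).congr ?_ (if_pos le_rfl)
      intro t ht
      exact if_pos ht.2
    have h2 : HasDerivWithinAt y (f x (u x)) (Icc x x₁) x := by
      have h2' := (hw x hx).mono (Icc_subset_Icc hx.1 le_rfl)
      rw [← hmatch] at h2'
      refine h2'.congr ?_ ((if_pos le_rfl).trans hmatch)
      intro t ht
      by_cases h : t ≤ x
      · have : t = x := le_antisymm h ht.1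
        subst this
        exact (if_pos le_rfl).trans hmatch
      · exact if_neg h
    have := h1.union h2
    rw [Icc_union_Icc_eq_Icc hx.1 hx.2] at this
    simpa [if_pos le_rfl] using this
  · have hyx : y x = w x := if_neg (not_le.2 hgt)
    have hev : y =ᶠ[𝓝[Icc x₀ x₁] x] w := by
      filter_upwards [nhdsWithin_le_nhds (Ioi_mem_nhds hgt)] with t ht
      exact if_neg (not_le.2 ht)
    have := (hw x hx).congr_of_eventuallyEq hev hyx
    simpa [if_neg (not_le.2 hgt)] using this

/-- Time reversal of a solution. -/
theorem reverse_sol {f : ℝ → ℝ → ℝ} {x₀ x₁ : ℝ} {w : ℝ → ℝ}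
    (hw : ∀ x ∈ Icc x₀ x₁, HasDerivWithinAt w
      ((fun s v => -f (x₀ + x₁ - s) v) x (w x)) (Icc x₀ x₁) x) :
    ∀ x ∈ Icc x₀ x₁, HasDerivWithinAt (fun t => w (x₀ + x₁ - t))
      (f x (w (x₀ + x₁ - x))) (Icc x₀ x₁) x := by
  intro x hx
  set s : ℝ := x₀ + x₁ - x with hs
  have hsmem : s ∈ Icc x₀ x₁ := ⟨by simp [hs]; linarith [hx.2], by simp [hs]; linarith [hx.1]⟩
  have hσ : HasDerivWithinAt (fun t => x₀ + x₁ - t) (-1) (Icc x₀ x₁) x := by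
    simpa using ((hasDerivAt_id x).const_sub (x₀ + x₁)).hasDerivWithinAt
  have hmaps : MapsTo (fun t => x₀ + x₁ - t) (Icc x₀ x₁) (Icc x₀ x₁) := by
    intro t ht
    exact ⟨by simp; linarith [ht.2], by simp; linarith [ht.1]⟩
  have hcomp := HasDerivWithinAt.comp x (hw s hsmem) hσ hmaps
  have hval : -f (x₀ + x₁ - s) (w s) * (-1) = f x (w (x₀ + x₁ - x)) := by
    have : x₀ + x₁ - s = x := by rw [hs]; ring
    rw [this, ← hs]; ring
  rw [hval] at hcomp
  exact hcomp


theorem limit_lemma {f : ℝ → ℝ → ℝ} (hf : Continuous fun p : ℝ × ℝ => f p.1 p.2)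
    {M x₀ x₁ y₀ : ℝ} (hx : x₀ ≤ x₁)
    {g : ℕ → ℝ → ℝ → ℝ} (hgc : ∀ n, Continuous fun p : ℝ × ℝ => g n p.1 p.2)
    (hgM : ∀ n x y, |g n x y| ≤ M)
    (hgf : ∀ ε > 0, ∃ N, ∀ n ≥ N, ∀ s ∈ Icc x₀ x₁,
      ∀ v ∈ Icc (y₀ - M * (x₁ - x₀)) (y₀ + M * (x₁ - x₀)), |g n s v - f s v| ≤ ε)
    {y : ℕ → ℝ → ℝ} (hy0 : ∀ n, y n x₀ = y₀)
    (hy : ∀ n, ∀ x ∈ Icc x₀ x₁, HasDerivWithinAt (y n) (g n x (y n x)) (Icc x₀ x₁) x) :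
    ∃ Y : ℝ → ℝ, Y x₀ = y₀ ∧
      (∀ x ∈ Icc x₀ x₁, HasDerivWithinAt Y (f x (Y x)) (Icc x₀ x₁) x) ∧
      ∃ φ : ℕ → ℕ, StrictMono φ ∧ Tendsto (fun k => y (φ k) x₁) atTop (𝓝 (Y x₁)) := by
  have hM0 : 0 ≤ M := (abs_nonneg _).trans (hgM 0 x₀ y₀)
  set lo := y₀ - M * (x₁ - x₀) with hlo
  set hi := y₀ + M * (x₁ - x₀) with hhi
  -- continuity of each solution on the interval
  have hyc : ∀ n, ContinuousOn (y n) (Icc x₀ x₁) :=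
    fun n t ht => (hy n t ht).continuousWithinAt
  -- the bounded continuous functions
  set F : ℕ → (Icc x₀ x₁ →ᵇ ℝ) :=
    fun n => BoundedContinuousFunction.mkOfCompact ⟨(Icc x₀ x₁).restrict (y n),
      (hyc n).restrict⟩ with hF
  have hFapp : ∀ n (a : Icc x₀ x₁), F n a = y n a := fun n a => rfl
  set A : Set (Icc x₀ x₁ →ᵇ ℝ) :=
    {G | (∀ t, G t ∈ Icc lo hi) ∧ ∀ s t : Icc x₀ x₁, dist (G s) (G t) ≤ M * dist s t} with hA
  have hclosed : IsClosed A := by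
    have h1 : IsClosed {G : Icc x₀ x₁ →ᵇ ℝ | ∀ t, G t ∈ Icc lo hi} := by
      rw [setOf_forall]
      exact isClosed_iInter fun t =>
        (isClosed_Icc).preimage (continuous_eval_const t)
    have h2 : IsClosed {G : Icc x₀ x₁ →ᵇ ℝ |
        ∀ s t : Icc x₀ x₁, dist (G s) (G t) ≤ M * dist s t} := by
      rw [setOf_forall]
      refine isClosed_iInter fun s => ?_
      rw [setOf_forall]
      refine isClosed_iInter fun t => ?_
      exact isClosed_le (((continuous_eval_const s).dist
        (continuous_eval_const t))) continuous_const
    exact h1.inter h2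
  have hmemA : ∀ n, F n ∈ A := by
    intro n
    constructor
    · intro t
      exact sol_mem_tube (hgM n) (hy n) (hy0 n) hx t.2
    · intro s t
      rw [hFapp, hFapp, Real.dist_eq, Subtype.dist_eq, Real.dist_eq]
      exact sol_dist_le (hgM n) (hy n) t.2 s.2
  have hcompact : IsCompact A := by
    have := BoundedContinuousFunction.arzela_ascoli (α := Icc x₀ x₁) (Icc lo hi) isCompact_Icc A
      (fun G t hG => hG.1 t) ?_
    · rwa [hclosed.closure_eq] at this
    · apply Metric.equicontinuous_of_continuity_modulus (fun d => M * d)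
      · have : Continuous fun d : ℝ => M * d := continuous_const.mul continuous_id
        simpa using this.tendsto 0
      · rintro s t ⟨G, hG⟩
        exact hG.2 s t
  obtain ⟨G, hGA, φ, hφ, hconv⟩ := hcompact.tendsto_subseq hmemA
  -- the limit function
  set Y : ℝ → ℝ := fun t => G (projIcc x₀ x₁ hx t) with hY
  have hYc : Continuous Y := G.continuous.comp continuous_projIcc
  have hYa : ∀ t (ht : t ∈ Icc x₀ x₁), Y t = G ⟨t, ht⟩ := by
    intro t ht; simp [hY, projIcc_of_mem hx ht]
  -- pointwise convergence
  have hptw : ∀ t (_ : t ∈ Icc x₀ x₁),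
      Tendsto (fun k => y (φ k) t) atTop (𝓝 (Y t)) := by
    intro t ht
    rw [hYa t ht]
    have : ∀ k, dist (y (φ k) t) (G ⟨t, ht⟩) ≤ dist (F (φ k)) G := by
      intro k
      rw [← hFapp (φ k) ⟨t, ht⟩]
      exact BoundedContinuousFunction.dist_coe_le_dist _
    refine (tendsto_iff_dist_tendsto_zero).2 <| squeeze_zero (fun k => dist_nonneg) this ?_
    exact (tendsto_iff_dist_tendsto_zero).1 hconv
  -- the integral identity in the limit
  have heq : ∀ x ∈ Icc x₀ x₁, Y x = y₀ + ∫ t in x₀..x, f t (Y t) := by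
    intro x hxm
    have hx0x : x₀ ≤ x := hxm.1
    have hIoc : Set.uIoc x₀ x = Ioc x₀ x := uIoc_of_le hx0x
    have hsub : Ioc x₀ x ⊆ Icc x₀ x₁ := fun t ht => ⟨ht.1.le, ht.2.trans hxm.2⟩
    have htend : Tendsto (fun k => ∫ t in x₀..x, g (φ k) t (y (φ k) t)) atTop
        (𝓝 (∫ t in x₀..x, f t (Y t))) := by
      apply intervalIntegral.tendsto_integral_filter_of_dominated_convergence
        (bound := fun _ => M)
      · refine Eventually.of_forall fun k => ?_
        rw [hIoc]
        have : ContinuousOn (fun t => g (φ k) t (y (φ k) t)) (Icc x₀ x₁) :=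
          (hgc (φ k)).comp_continuousOn (continuousOn_id.prodMk (hyc (φ k)))
        exact (this.mono hsub).aestronglyMeasurable measurableSet_Ioc
      · refine Eventually.of_forall fun k => MeasureTheory.ae_of_all _ fun t _ => ?_
        simpa [Real.norm_eq_abs] using hgM (φ k) t (y (φ k) t)
      · exact intervalIntegrable_const
      · refine MeasureTheory.ae_of_all _ fun t htm => ?_
        rw [hIoc] at htm
        have htI : t ∈ Icc x₀ x₁ := hsub htm
        have hyt := hptw t htI
        have h1 : Tendsto (fun k => f t (y (φ k) t)) atTop (𝓝 (f t (Y t))) := by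
          have hc : Continuous fun v => f t v := hf.comp (continuous_const.prodMk continuous_id)
          exact (hc.tendsto _).comp hyt
        have h2 : Tendsto (fun k => g (φ k) t (y (φ k) t) - f t (y (φ k) t)) atTop (𝓝 0) := by
          rw [Metric.tendsto_atTop]
          intro ε hε
          obtain ⟨N, hN⟩ := hgf (ε / 2) (half_pos hε)
          refine ⟨N, fun k hk => ?_⟩
          have hφk : N ≤ φ k := hk.trans (hφ.le_apply)
          have hmem : y (φ k) t ∈ Icc lo hi :=
            sol_mem_tube (hgM (φ k)) (hy (φ k)) (hy0 (φ k)) hx htI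
          have := hN (φ k) hφk t htI _ hmem
          rw [Real.dist_eq, sub_zero]
          linarith
        have := h2.add h1
        simpa using this
    have h1 : Tendsto (fun k => y (φ k) x) atTop (𝓝 (y₀ + ∫ t in x₀..x, f t (Y t))) := by
      have hidk : ∀ k, y (φ k) x = y₀ + ∫ t in x₀..x, g (φ k) t (y (φ k) t) := by
        intro k
        have := sol_integral (hgc (φ k)) (hy (φ k)) hxm
        rwa [hy0 (φ k)] at this
      simp only [hidk]
      exact tendsto_const_nhds.add htend
    exact tendsto_nhds_unique (hptw x hxm) h1
  have hY0 : Y x₀ = y₀ := by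
    have := heq x₀ ⟨le_rfl, hx⟩
    simpa using this
  exact ⟨Y, hY0, integral_sol hf hYc heq, φ, hφ, hptw x₁ ⟨hx, le_rfl⟩⟩


end KneserAux

open KneserAux

/-- Kneser's theorem on the funnel section: for `y' = f(x,y)` with `f` continuous and
bounded, the set of values `y x₁` attained by solutions of the initial value problem
`y x₀ = y₀` on `[x₀, x₁]` is a compact interval. -/
theorem kneser_funnel_section (f : ℝ → ℝ → ℝ)
    (hcont : Continuous fun p : ℝ × ℝ => f p.1 p.2)
    (hbdd : ∃ M, ∀ x y, |f x y| ≤ M)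
    (x₀ x₁ y₀ : ℝ) (hx : x₀ < x₁) :
    ∃ a b : ℝ, a ≤ b ∧
      {c : ℝ | ∃ y : ℝ → ℝ, y x₀ = y₀ ∧
        (∀ x ∈ Icc x₀ x₁, HasDerivWithinAt y (f x (y x)) (Icc x₀ x₁) x) ∧
        y x₁ = c} = Icc a b := by
  classical
  obtain ⟨M, hM⟩ := hbdd
  have hM0 : 0 ≤ M := (abs_nonneg _).trans (hM x₀ y₀)
  set S : Set ℝ := {c : ℝ | ∃ y : ℝ → ℝ, y x₀ = y₀ ∧
      (∀ x ∈ Icc x₀ x₁, HasDerivWithinAt y (f x (y x)) (Icc x₀ x₁) x) ∧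
      y x₁ = c} with hSdef
  -- the limit lemma, specialized
  have limitf : ∀ {g : ℕ → ℝ → ℝ → ℝ}, (∀ n, Continuous fun p : ℝ × ℝ => g n p.1 p.2) →
      (∀ n x y, |g n x y| ≤ M) →
      (∀ ε > 0, ∃ N, ∀ n ≥ N, ∀ s ∈ Icc x₀ x₁,
        ∀ v ∈ Icc (y₀ - M * (x₁ - x₀)) (y₀ + M * (x₁ - x₀)), |g n s v - f s v| ≤ ε) →
      ∀ {y : ℕ → ℝ → ℝ}, (∀ n, y n x₀ = y₀) →
      (∀ n, ∀ x ∈ Icc x₀ x₁, HasDerivWithinAt (y n) (g n x (y n x)) (Icc x₀ x₁) x) →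
      ∃ Y : ℝ → ℝ, Y x₀ = y₀ ∧
        (∀ x ∈ Icc x₀ x₁, HasDerivWithinAt Y (f x (Y x)) (Icc x₀ x₁) x) ∧
        ∃ φ : ℕ → ℕ, StrictMono φ ∧ Tendsto (fun k => y (φ k) x₁) atTop (𝓝 (Y x₁)) :=
    fun {g} hgc hgM hgf {y} hy0 hy => limit_lemma hcont hx.le hgc hgM hgf hy0 hy
  -- nonemptiness via Peano
  obtain ⟨u0, hu00, hu0⟩ := peano hcont hM x₀ x₁ y₀ hx.le limitf
  have hne : S.Nonempty := ⟨u0 x₁, ⟨u0, hu00, hu0, rfl⟩⟩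
  -- bounds
  have hsub : S ⊆ Icc (y₀ - M * (x₁ - x₀)) (y₀ + M * (x₁ - x₀)) := by
    rintro c ⟨y, hy0, hy, rfl⟩
    exact sol_mem_tube hM hy hy0 hx.le ⟨hx.le, le_rfl⟩
  -- closedness
  have hclosed : IsClosed S := by
    refine IsSeqClosed.isClosed ?_
    intro cs c hcs hlim
    choose ys hys0 hys hysx using hcs
    have hgf0 : ∀ ε > (0:ℝ), ∃ N, ∀ n ≥ N, ∀ s ∈ Icc x₀ x₁,
        ∀ v ∈ Icc (y₀ - M * (x₁ - x₀)) (y₀ + M * (x₁ - x₀)),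
        |(fun _ : ℕ => f) n s v - f s v| ≤ ε := by
      intro ε hε
      exact ⟨0, fun n _ s _ v _ => by simpa using hε.le⟩
    obtain ⟨Y, hY0, hYsol, φ, hφ, hconv⟩ :=
      limitf (g := fun _ => f) (fun _ => hcont) (fun _ => hM) hgf0 hys0 hys
    have h1 : Tendsto (fun k => ys (φ k) x₁) atTop (𝓝 c) := by
      simp only [hysx]
      exact hlim.comp hφ.tendsto_atTop
    exact ⟨Y, hY0, hYsol, tendsto_nhds_unique hconv h1⟩
  have hcomp : IsCompact S := isCompact_Icc.of_isClosed_subset hclosed hsub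
  refine ⟨sInf S, sSup S, csInf_le_csSup hne hcomp.bddBelow hcomp.bddAbove, ?_⟩
  have haS : sInf S ∈ S := hcomp.sInf_mem hne
  have hbS : sSup S ∈ S := hcomp.sSup_mem hne
  apply Subset.antisymm
  · intro c hc
    exact ⟨csInf_le hcomp.bddBelow hc, le_csSup hcomp.bddAbove hc⟩
  · intro c hc
    obtain ⟨u, hu0, hu, hux⟩ := haS
    obtain ⟨w, hw0, hw, hwx⟩ := hbS
    -- backward solution with value c at x₁
    have hfb : Continuous fun p : ℝ × ℝ =>
        (fun s v => -f (x₀ + x₁ - s) v) p.1 p.2 := by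
      have : Continuous fun p : ℝ × ℝ => ((x₀ + x₁ - p.1, p.2) : ℝ × ℝ) :=
        (continuous_const.sub continuous_fst).prodMk continuous_snd
      exact (hcont.comp this).neg
    have hMb : ∀ x y, |(fun s v => -f (x₀ + x₁ - s) v) x y| ≤ M := by
      intro x y
      simpa [abs_neg] using hM (x₀ + x₁ - x) y
    have limitb : ∀ {g : ℕ → ℝ → ℝ → ℝ},
        (∀ n, Continuous fun p : ℝ × ℝ => g n p.1 p.2) →
        (∀ n x y, |g n x y| ≤ M) →
        (∀ ε > 0, ∃ N, ∀ n ≥ N, ∀ s ∈ Icc x₀ x₁,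
          ∀ v ∈ Icc (c - M * (x₁ - x₀)) (c + M * (x₁ - x₀)),
          |g n s v - (fun s v => -f (x₀ + x₁ - s) v) s v| ≤ ε) →
        ∀ {y : ℕ → ℝ → ℝ}, (∀ n, y n x₀ = c) →
        (∀ n, ∀ x ∈ Icc x₀ x₁, HasDerivWithinAt (y n) (g n x (y n x)) (Icc x₀ x₁) x) →
        ∃ Y : ℝ → ℝ, Y x₀ = c ∧
          (∀ x ∈ Icc x₀ x₁, HasDerivWithinAt Y
            ((fun s v => -f (x₀ + x₁ - s) v) x (Y x)) (Icc x₀ x₁) x) ∧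
          ∃ φ : ℕ → ℕ, StrictMono φ ∧ Tendsto (fun k => y (φ k) x₁) atTop (𝓝 (Y x₁)) :=
      fun {g} hgc hgM hgf {y} hy0 hy => limit_lemma hfb hx.le hgc hgM hgf hy0 hy
    obtain ⟨wb, hwb0, hwb⟩ := peano hfb hMb x₀ x₁ c hx.le limitb
    set z : ℝ → ℝ := fun t => wb (x₀ + x₁ - t) with hzdef
    have hz : ∀ x ∈ Icc x₀ x₁, HasDerivWithinAt z (f x (z x)) (Icc x₀ x₁) x :=
      reverse_sol hwb
    have hzx1 : z x₁ = c := by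
      rw [hzdef]
      simp only
      rw [show x₀ + x₁ - x₁ = x₀ by ring, hwb0]
    have huc : ContinuousOn u (Icc x₀ x₁) := fun t ht => (hu t ht).continuousWithinAt
    have hwc : ContinuousOn w (Icc x₀ x₁) := fun t ht => (hw t ht).continuousWithinAt
    have hzc : ContinuousOn z (Icc x₀ x₁) := fun t ht => (hz t ht).continuousWithinAt
    rcases le_total (z x₀) y₀ with hcase | hcase
    · -- glue u and z
      have hivt := intermediate_value_Icc' hx.le (huc.sub hzc)
      have h0mem : (0 : ℝ) ∈ Icc (u x₁ - z x₁) (u x₀ - z x₀) := by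
        rw [hux, hzx1, hu0]
        exact ⟨by linarith [hc.1], by linarith⟩
      obtain ⟨xs, hxsmem, hxs0⟩ := hivt h0mem
      have hmatch : u xs = z xs := by
        have : u xs - z xs = 0 := hxs0
        linarith
      refine ⟨fun t => if t ≤ xs then u t else z t, ?_, ?_, ?_⟩
      · show (if x₀ ≤ xs then u x₀ else z x₀) = y₀
        rw [if_pos hxsmem.1, hu0]
      · exact glue_sol hxsmem hu hz hmatch
      · show (if x₁ ≤ xs then u x₁ else z x₁) = c
        by_cases hx1 : x₁ ≤ xs
        · have hxe : xs = x₁ := le_antisymm hxsmem.2 hx1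
          rw [if_pos hx1, ← hxe, hmatch, hxe, hzx1]
        · rw [if_neg hx1, hzx1]
    · -- glue w and z
      have hivt := intermediate_value_Icc (f := fun t => w t - z t) hx.le (hwc.sub hzc)
      have h0mem : (0 : ℝ) ∈ Icc (w x₀ - z x₀) (w x₁ - z x₁) := by
        rw [hwx, hzx1, hw0]
        exact ⟨by linarith, by linarith [hc.2]⟩
      obtain ⟨xs, hxsmem, hxs0⟩ := hivt h0mem
      have hmatch : w xs = z xs := by
        have : w xs - z xs = 0 := hxs0
        linarith
      refine ⟨fun t => if t ≤ xs then w t else z t, ?_, ?_, ?_⟩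
      · show (if x₀ ≤ xs then w x₀ else z x₀) = y₀
        rw [if_pos hxsmem.1, hw0]
      · exact glue_sol hxsmem hw hz hmatch
      · show (if x₁ ≤ xs then w x₁ else z x₁) = c
        by_cases hx1 : x₁ ≤ xs
        · have hxe : xs = x₁ := le_antisymm hxsmem.2 hx1
          rw [if_pos hx1, ← hxe, hmatch, hxe, hzx1]
        · rw [if_neg hx1, hzx1]
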